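/- Let R be a reduced crystallographic root system in a finite-dimensional real inner product space E, let S be a base of R, and let H lie in the open fundamental Weyl chamber K(S), with S(H) = {α ∈ R : ⟨α, H⟩ = 2} nonempty. Let R(H) be the root subsystem of R with base S(H) (the images of S(H) under the group generated by the reflections in elements of S(H)), and let R(H)₊ be its positive roots with respect to S(H). Write H = H_∥ + H_⊥ where H_∥ is the orthogonal projection of H onto the span of S(H). Then H_∥ = Σ_{α ∈ R(H)₊} α*, where α* = 2α/⟨α,α⟩ is the inverse root of α; in particular H_∥ lies in the ℤ-span of the inverse roots of R. -/

import Mathlib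

open scoped RealInnerProductSpace

/-- A reduced crystallographic root system in a real inner product space `E`:
a finite set of nonzero vectors, with integral Cartan numbers, closed under the
reflections it defines, and such that the only multiples of a root `α` that are
roots are `±α`. -/
def IsRootSystem {E : Type*} [NormedAddCommGroup E] [InnerProductSpace ℝ E]
    (R : Set E) : Prop :=
  R.Finite ∧ (0 : E) ∉ R ∧
  (∀ α ∈ R, ∀ β ∈ R, ∃ n : ℤ, 2 * ⟪β, α⟫ / ⟪α, α⟫ = (n : ℝ)) ∧
  (∀ α ∈ R, ∀ β ∈ R, β - (2 * ⟪β, α⟫ / ⟪α, α⟫) • α ∈ R) ∧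
  (∀ α ∈ R, ∀ t : ℝ, t • α ∈ R → t = 1 ∨ t = -1)

/-- `S` is a base (simple system) of the root system `R`: a linearly independent
subset such that every root is an integer linear combination of elements of `S`
with coefficients all nonnegative or all nonpositive. -/
def IsBase {E : Type*} [NormedAddCommGroup E] [InnerProductSpace ℝ E]
    (R S : Set E) : Prop :=
  S ⊆ R ∧ LinearIndependent ℝ ((↑) : S → E) ∧
  ∀ β ∈ R, ∃ c : E →₀ ℤ, ↑c.support ⊆ S ∧
    β = c.sum (fun α n => (n : ℝ) • α) ∧
    ((∀ α, 0 ≤ c α) ∨ (∀ α, c α ≤ 0))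

/-- The reflection `s_β : x ↦ x - (2⟪x,β⟫/⟪β,β⟫) β` in the hyperplane orthogonal
to `β`, as an element of the monoid `Function.End E` of self-maps of `E`. -/
noncomputable def sRefl {E : Type*} [NormedAddCommGroup E] [InnerProductSpace ℝ E]
    (β : E) : Function.End E :=
  fun x => x - (2 * ⟪x, β⟫ / ⟪β, β⟫) • β

/-- The set of all images of elements of `Sg` under the group generated by the
reflections `s_β`, `β ∈ Sg` (since each reflection is an involution, this group
coincides with the generated monoid of self-maps). -/
noncomputable def subSystem {E : Type*} [NormedAddCommGroup E] [InnerProductSpace ℝ E]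
    (Sg : Set E) : Set E :=
  {x | ∃ w ∈ Submonoid.closure (sRefl '' Sg), ∃ α ∈ Sg, x = w α}

/-- `β` is an integer linear combination of elements of `S'` with all
coefficients nonnegative. -/
def IsNonnegCombo {E : Type*} [NormedAddCommGroup E] [InnerProductSpace ℝ E]
    (S' : Set E) (β : E) : Prop :=
  ∃ c : E →₀ ℤ, ↑c.support ⊆ S' ∧ β = c.sum (fun α n => (n : ℝ) • α) ∧ ∀ α, 0 ≤ c α

/-- The inverse root `α* = 2α/⟪α,α⟫`. -/
noncomputable def invRoot {E : Type*} [NormedAddCommGroup E] [InnerProductSpace ℝ E]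
    (α : E) : E :=
  (2 / ⟪α, α⟫) • α

/-- `β` is an integer linear combination of elements of `S'`. -/
def IsIntCombo {E : Type*} [NormedAddCommGroup E] [InnerProductSpace ℝ E]
    (S' : Set E) (β : E) : Prop :=
  ∃ c : E →₀ ℤ, ↑c.support ⊆ S' ∧ β = c.sum (fun α n => (n : ℝ) • α)

section aux
variable {E : Type*} [NormedAddCommGroup E] [InnerProductSpace ℝ E] {R : Set E}

lemma root_ne_zero (hR : IsRootSystem R) {α : E} (hα : α ∈ R) : α ≠ 0 :=
  fun h => hR.2.1 (h ▸ hα)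

lemma root_self_pos (hR : IsRootSystem R) {α : E} (hα : α ∈ R) : 0 < ⟪α, α⟫ :=
  lt_of_le_of_ne real_inner_self_nonneg
    (Ne.symm ((inner_self_ne_zero (𝕜 := ℝ)).2 (root_ne_zero hR hα)))

lemma root_refl_mem (hR : IsRootSystem R) {α β : E} (hα : α ∈ R) (hβ : β ∈ R) :
    β - (2 * ⟪β, α⟫ / ⟪α, α⟫) • α ∈ R := hR.2.2.2.1 α hα β hβ

lemma root_neg_mem (hR : IsRootSystem R) {α : E} (hα : α ∈ R) : -α ∈ R := by
  have h := root_refl_mem hR hα hα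
  have hs : 2 * ⟪α, α⟫ / ⟪α, α⟫ = 2 :=
    mul_div_cancel_right₀ 2 (ne_of_gt (root_self_pos hR hα))
  rw [hs] at h
  have : α - (2:ℝ) • α = -α := by rw [two_smul]; abel
  rwa [this] at h

lemma root_cartan (hR : IsRootSystem R) {α β : E} (hα : α ∈ R) (hβ : β ∈ R) :
    ∃ n : ℤ, 2 * ⟪β, α⟫ / ⟪α, α⟫ = (n : ℝ) := hR.2.2.1 α hα β hβ

/-- If two roots have positive inner product, they are equal or their difference is a root. -/
lemma root_acute (hR : IsRootSystem R) {α β : E} (hα : α ∈ R) (hβ : β ∈ R)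
    (hpos : 0 < ⟪β, α⟫) : β = α ∨ β - α ∈ R := by
  by_cases hdep : ∃ t : ℝ, t ≠ 0 ∧ α = t • β
  · obtain ⟨t, ht0, rfl⟩ := hdep
    rcases hR.2.2.2.2 β hβ t hα with h1 | h1
    · left; rw [h1, one_smul]
    · exfalso
      rw [h1, real_inner_smul_right] at hpos
      nlinarith [root_self_pos hR hβ]
  · obtain ⟨n₁, hn₁⟩ := root_cartan hR hα hβ
    obtain ⟨n₂, hn₂⟩ := root_cartan hR hβ hα
    have hαα := root_self_pos hR hα
    have hββ := root_self_pos hR hβ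
    have hn₁pos : (0:ℝ) < n₁ := by rw [← hn₁]; positivity
    have hn₂pos : (0:ℝ) < n₂ := by
      rw [← hn₂, real_inner_comm]; positivity
    -- strict Cauchy-Schwarz
    have habs : |⟪β, α⟫| < ‖β‖ * ‖α‖ := by
      rcases lt_or_eq_of_le (abs_real_inner_le_norm β α) with h | h
      · exact h
      · exfalso
        apply hdep
        have := (norm_inner_eq_norm_iff (𝕜 := ℝ) (x := β) (y := α)
          (root_ne_zero hR hβ) (root_ne_zero hR hα)).1 (by rwa [Real.norm_eq_abs])
        exact this
    have hcs : ⟪β, α⟫ * ⟪β, α⟫ < ⟪β, β⟫ * ⟪α, α⟫ := by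
      have h2 : ⟪β, β⟫ = ‖β‖ * ‖β‖ := real_inner_self_eq_norm_mul_norm β
      have h3 : ⟪α, α⟫ = ‖α‖ * ‖α‖ := real_inner_self_eq_norm_mul_norm α
      have h4 : (0:ℝ) ≤ |⟪β, α⟫| := abs_nonneg _
      nlinarith [abs_mul_abs_self ⟪β, α⟫]
    have hprod : (n₁ : ℝ) * n₂ < 4 := by
      have hc : ⟪α, β⟫ = ⟪β, α⟫ := real_inner_comm β α
      rw [← hn₁, ← hn₂, hc, div_mul_div_comm, div_lt_iff₀ (by positivity)]
      nlinarith [hcs]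
    have h1 : (1:ℤ) ≤ n₁ := by exact_mod_cast hn₁pos
    have h2 : (1:ℤ) ≤ n₂ := by exact_mod_cast hn₂pos
    have h34 : n₁ * n₂ < 4 := by exact_mod_cast hprod
    have : n₁ = 1 ∨ n₂ = 1 := by
      by_contra hcon
      push_neg at hcon
      have : 2 ≤ n₁ := by omega
      have : 2 ≤ n₂ := by omega
      nlinarith
    rcases this with h | h
    · right
      have := root_refl_mem hR hα hβ
      rw [hn₁, h] at this
      simpa using this
    · have := root_refl_mem hR hβ hα
      rw [hn₂, h] at this
      simp only [Int.cast_one, one_smul] at this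
      have := root_neg_mem hR this
      rcases eq_or_ne β α with he | hne
      · exact Or.inl he
      · right
        simpa [neg_sub] using this
end aux

section aux2
variable {E : Type*} [NormedAddCommGroup E] [InnerProductSpace ℝ E] {R : Set E}

/-- The δ-string through β is unbroken between β and its reflection. -/
lemma root_int_smul_eq_one (hR : IsRootSystem R) {δ : E} (hδ : δ ∈ R) {m : ℤ}
    (h0 : 0 ≤ m) (hb : ((m:ℤ):ℝ) • δ ∈ R) : m = 1 := by
  rcases hR.2.2.2.2 δ hδ _ hb with h1 | h1
  · exact_mod_cast h1
  · exfalso; have : (m:ℤ) = -1 := by exact_mod_cast h1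
    omega

lemma root_string (hR : IsRootSystem R) {β δ : E} (hβ : β ∈ R) (hδ : δ ∈ R)
    {n : ℤ} (hn : 2 * ⟪β, δ⟫ = (n : ℝ) * ⟪δ, δ⟫) :
    ∀ k : ℤ, 0 ≤ k → k ≤ n → β - (k : ℝ) • δ ∈ insert (0:E) R := by
  have hδδ := root_self_pos hR hδ
  -- first half
  have claim1 : ∀ m : ℕ, 2 * (m:ℤ) ≤ n → β - ((m:ℤ):ℝ) • δ ∈ insert (0:E) R := by
    intro m
    induction m with
    | zero => intro _; simpa using Or.inr hβ
    | succ m ih =>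
      intro hm
      have hm' : 2 * (m:ℤ) ≤ n := by push_cast at hm ⊢; omega
      rcases ih hm' with h0 | hmem
      · -- β = m • δ forces m = 1, β = δ, n = 2, contradiction with 2(m+1) ≤ n
        exfalso
        have hb : β = ((m:ℤ):ℝ) • δ := sub_eq_zero.1 h0
        have hm1 : (m:ℤ) = 1 := root_int_smul_eq_one hR hδ (by positivity) (hb ▸ hβ)
        have hβδ : β = δ := by rw [hb, hm1]; norm_num
        have hn2 : (2:ℝ) = (n:ℝ) := by
          have h2 : 2 * ⟪δ, δ⟫ = (n:ℝ) * ⟪δ, δ⟫ := hβδ ▸ hn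
          exact mul_right_cancel₀ (ne_of_gt hδδ) h2
        have : n = 2 := by exact_mod_cast hn2.symm
        omega
      · -- x := β - m δ ∈ R, inner with δ positive
        set x := β - ((m:ℤ):ℝ) • δ with hxdef
        have hxδ : 0 < ⟪x, δ⟫ := by
          rw [hxdef, inner_sub_left, real_inner_smul_left]
          have : 2 * ⟪β, δ⟫ - 2 * ((m:ℤ):ℝ) * ⟪δ, δ⟫ ≥ 2 * ⟪δ, δ⟫ := by
            rw [hn]
            have : (2:ℝ) * (m:ℤ) + 2 ≤ (n:ℝ) := by push_cast at hm ⊢; exact_mod_cast hm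
            nlinarith
          linarith
        rcases root_acute hR hδ hmem hxδ with h | h
        · -- x = δ : β - (m+1)δ = 0
          left
          rw [hxdef] at h
          push_cast
          rw [sub_eq_zero]
          rw [sub_eq_iff_eq_add] at h
          rw [h]
          match_scalars <;> ring
        · right
          have : x - δ = β - (((m:ℕ)+1 : ℤ):ℝ) • δ := by
            rw [hxdef]; push_cast; match_scalars <;> ring
          rw [this] at h
          exact_mod_cast h
  intro k hk0 hkn
  by_cases h2k : 2 * k ≤ n
  · have := claim1 k.toNat (by omega)
    rwa [Int.toNat_of_nonneg hk0] at this
  · -- reflect: k' = n - k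
    push_neg at h2k
    set k' : ℤ := n - k with hk'
    have hk'0 : 0 ≤ k' := by omega
    have h2k' : 2 * k' ≤ n := by omega
    have hx := claim1 k'.toNat (by omega)
    rw [Int.toNat_of_nonneg hk'0] at hx
    rcases hx with h0 | hmem
    ·
      have hb : β = ((k':ℤ):ℝ) • δ := sub_eq_zero.1 h0
      have hm1 : (k':ℤ) = 1 := root_int_smul_eq_one hR hδ hk'0 (hb ▸ hβ)
      have hβδ : β = δ := by rw [hb, hm1]; norm_num
      have hn2 : (2:ℝ) = (n:ℝ) := by
        have h2 : 2 * ⟪δ, δ⟫ = (n:ℝ) * ⟪δ, δ⟫ := hβδ ▸ hn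
        exact mul_right_cancel₀ (ne_of_gt hδδ) h2
      have hn2' : n = 2 := by exact_mod_cast hn2.symm
      have hk2 : k = 2 := by omega
      right
      rw [hβδ, hk2]
      have : δ - ((2:ℤ):ℝ) • δ = -δ := by push_cast; match_scalars <;> ring
      rw [show ((2:ℤ):ℝ) = ((2:ℤ):ℝ) from rfl] at this
      rw [show ((2:ℤ):ℝ) • δ = ((2:ℝ)) • δ by push_cast; ring_nf] at this
      push_cast
      rw [this]
      exact root_neg_mem hR hδ
    · right
      have := root_refl_mem hR hδ hmem
      have heq : (β - (k':ℝ) • δ) - (2 * ⟪β - (k':ℝ) • δ, δ⟫ / ⟪δ, δ⟫) • δ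
          = β - (k:ℝ) • δ := by
        have h1 : 2 * ⟪β - (k':ℝ) • δ, δ⟫ = ((2*k - n : ℤ):ℝ) * ⟪δ, δ⟫ := by
          rw [inner_sub_left, real_inner_smul_left]
          push_cast [hk']
          ring_nf
          linarith [hn]
        rw [h1, mul_div_assoc, div_self (ne_of_gt hδδ), mul_one, hk']
        push_cast
        match_scalars <;> ring
      rw [heq] at this
      exact this
end aux2

section aux3
variable {E : Type*} [NormedAddCommGroup E] [InnerProductSpace ℝ E] {R SH : Set E}

lemma sRefl_apply (β x : E) : sRefl β x = x - (2 * ⟪x, β⟫ / ⟪β, β⟫) • β := rfl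

lemma sRefl_neg (β x : E) : sRefl β (-x) = -(sRefl β x) := by
  simp only [sRefl_apply, inner_neg_left]
  match_scalars <;> ring

lemma sRefl_smul (β : E) (t : ℝ) (x : E) : sRefl β (t • x) = t • sRefl β x := by
  simp only [sRefl_apply, real_inner_smul_left]
  match_scalars <;> ring

lemma sRefl_add (β x y : E) : sRefl β (x + y) = sRefl β x + sRefl β y := by
  simp only [sRefl_apply, inner_add_left]
  match_scalars <;> ring

/-- `sRefl β` as a linear map. -/
noncomputable def sReflL (β : E) : E →ₗ[ℝ] E where
  toFun := sRefl β
  map_add' x y := sRefl_add β x y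
  map_smul' t x := sRefl_smul β t x

lemma sRefl_self {β : E} (h : ⟪β, β⟫ ≠ 0) : sRefl β β = -β := by
  rw [sRefl_apply, mul_div_assoc, div_self h, mul_one, two_smul]
  abel

lemma sRefl_inner_self {β : E} (h : ⟪β, β⟫ ≠ 0) (x : E) :
    ⟪sRefl β x, sRefl β x⟫ = ⟪x, x⟫ := by
  rw [sRefl_apply, inner_sub_sub_self]
  simp only [real_inner_smul_left, real_inner_smul_right]
  rw [real_inner_comm β x]
  field_simp
  ring

lemma sRefl_invol {β : E} (h : ⟪β, β⟫ ≠ 0) (x : E) : sRefl β (sRefl β x) = x := by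
  simp only [sRefl_apply, inner_sub_left, real_inner_smul_left]
  field_simp
  match_scalars <;> ring

lemma w_neg {w : Function.End E} (hw : w ∈ Submonoid.closure (sRefl '' SH)) :
    ∀ x, w (-x) = -(w x) := by
  induction hw using Submonoid.closure_induction with
  | mem w hw =>
    obtain ⟨β, _, rfl⟩ := hw
    exact fun x => sRefl_neg β x
  | one => intro x; rfl
  | mul w₁ w₂ h₁ h₂ ih₁ ih₂ =>
    intro x
    show w₁ (w₂ (-x)) = -(w₁ (w₂ x))
    rw [ih₂, ih₁]

lemma mem_subSystem_self {α : E} (hα : α ∈ SH) : α ∈ subSystem SH :=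
  ⟨1, Submonoid.one_mem _, α, hα, rfl⟩

lemma subSystem_refl_mem {γ β : E} (hγ : γ ∈ SH) (hβ : β ∈ subSystem SH) :
    sRefl γ β ∈ subSystem SH := by
  obtain ⟨w, hw, α, hα, rfl⟩ := hβ
  exact ⟨sRefl γ * w, Submonoid.mul_mem _
    (Submonoid.subset_closure ⟨γ, hγ, rfl⟩) hw, α, hα, rfl⟩

lemma subSystem_neg_mem (hR : IsRootSystem R) (hSHR : SH ⊆ R) {β : E}
    (hβ : β ∈ subSystem SH) : -β ∈ subSystem SH := by
  obtain ⟨w, hw, α, hα, rfl⟩ := hβ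
  refine ⟨w * sRefl α, Submonoid.mul_mem _ hw
    (Submonoid.subset_closure ⟨α, hα, rfl⟩), α, hα, ?_⟩
  show -(w α) = w (sRefl α α)
  rw [sRefl_self (ne_of_gt (root_self_pos hR (hSHR hα))), w_neg hw]

lemma subSystem_root_and_combo (hR : IsRootSystem R) (hSHR : SH ⊆ R) {β : E}
    (hβ : β ∈ subSystem SH) : β ∈ R ∧ IsIntCombo SH β := by
  obtain ⟨w, hw, α, hα, rfl⟩ := hβ
  classical
  have key : ∀ x, x ∈ R → IsIntCombo SH x → w x ∈ R ∧ IsIntCombo SH (w x) := by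
    clear hα
    induction hw using Submonoid.closure_induction with
    | mem w hw =>
      obtain ⟨γ, hγ, rfl⟩ := hw
      intro x hxR ⟨c, hcsupp, hcsum⟩
      obtain ⟨n, hn⟩ := root_cartan hR (hSHR hγ) hxR
      constructor
      · exact root_refl_mem hR (hSHR hγ) hxR
      · refine ⟨c + Finsupp.single γ (-n), ?_, ?_⟩
        · refine Set.Subset.trans (Finset.coe_subset.2 Finsupp.support_add) ?_
          rw [Finset.coe_union]
          refine Set.union_subset hcsupp ?_
          refine Set.Subset.trans (Finset.coe_subset.2 Finsupp.support_single_subset) ?_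
          simpa using hγ
        · rw [Finsupp.sum_add_index' (by intro a; simp) (by intro a b₁ b₂; push_cast; rw [add_smul])]
          rw [Finsupp.sum_single_index (by simp)]
          rw [sRefl_apply, hn, ← hcsum]
          push_cast
          match_scalars <;> ring
    | one => exact fun x hx hc => ⟨hx, hc⟩
    | mul w₁ w₂ h₁ h₂ ih₁ ih₂ =>
      intro x hx hc
      obtain ⟨hx₂, hc₂⟩ := ih₂ x hx hc
      exact ih₁ _ hx₂ hc₂
  refine key α (hSHR hα) ⟨Finsupp.single α 1, ?_, ?_⟩
  · refine Set.Subset.trans (Finset.coe_subset.2 Finsupp.support_single_subset) ?_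
    simpa using hα
  · rw [Finsupp.sum_single_index (by simp)]
    simp

end aux3

section aux4
variable {E : Type*} [NormedAddCommGroup E] [InnerProductSpace ℝ E]
  {R S SH : Set E} {H : E}

lemma combo_level (c : E →₀ ℤ) (hsupp : ↑c.support ⊆ SH) (h2 : ∀ γ ∈ SH, ⟪γ, H⟫ = 2) :
    ⟪c.sum (fun α n => (n : ℝ) • α), H⟫ = 2 * ((c.sum fun _ n => n : ℤ) : ℝ) := by
  rw [Finsupp.sum, Finsupp.sum, sum_inner]
  push_cast
  rw [Finset.mul_sum]
  refine Finset.sum_congr rfl fun a ha => ?_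
  rw [real_inner_smul_left, h2 a (hsupp ha)]
  ring

lemma root_level_ne_zero (hR : IsRootSystem R) (hS : IsBase R S)
    (hH : ∀ α ∈ S, 0 < ⟪α, H⟫) {β : E} (hβ : β ∈ R) : ⟪β, H⟫ ≠ 0 := by
  obtain ⟨c, hsupp, hsum, hsign⟩ := hS.2.2 β hβ
  intro h0
  have hlev : ∑ a ∈ c.support, (c a : ℝ) * ⟪a, H⟫ = 0 := by
    rw [← h0, hsum, Finsupp.sum, sum_inner]
    exact (Finset.sum_congr rfl fun a _ => (real_inner_smul_left a H _).symm)
  have hzero : ∀ a ∈ c.support, c a = 0 := by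
    rcases hsign with hpos | hneg
    · have := (Finset.sum_eq_zero_iff_of_nonneg (fun a ha => ?_)).1 hlev
      · intro a ha
        have h := this a ha
        have hpa : 0 < ⟪a, H⟫ := hH a (hsupp ha)
        have : (c a : ℝ) = 0 := by
          rcases mul_eq_zero.1 h with h | h
          · exact h
          · exact absurd h (ne_of_gt hpa)
        exact_mod_cast this
      · have hpa : 0 < ⟪a, H⟫ := hH a (hsupp ha)
        have h9 : (0:ℝ) ≤ (c a : ℝ) := by exact_mod_cast hpos a
        exact mul_nonneg h9 hpa.le
    · have hlev' : ∑ a ∈ c.support, (-(c a : ℝ)) * ⟪a, H⟫ = 0 := by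
        rw [← neg_eq_zero] at hlev
        rw [← hlev, ← Finset.sum_neg_distrib]
        exact Finset.sum_congr rfl fun a _ => by ring
      have := (Finset.sum_eq_zero_iff_of_nonneg (fun a ha => ?_)).1 hlev'
      · intro a ha
        have h := this a ha
        have hpa : 0 < ⟪a, H⟫ := hH a (hsupp ha)
        have : (c a : ℝ) = 0 := by
          rcases mul_eq_zero.1 h with h | h
          · linarith [neg_eq_zero.1 h]
          · exact absurd h (ne_of_gt hpa)
        exact_mod_cast this
      · have hpa : 0 < ⟪a, H⟫ := hH a (hsupp ha)
        have h9 : (c a : ℝ) ≤ 0 := by exact_mod_cast hneg a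
        exact mul_nonneg (by linarith) hpa.le
  have : β = 0 := by
    rw [hsum, Finsupp.sum]
    exact Finset.sum_eq_zero fun a ha => by rw [hzero a ha]; simp
  exact root_ne_zero hR hβ this

/-- Vectors on the positive side of a hyperplane, pairwise non-acute, are independent. -/
lemma obtuse_indep (H : E) (T : Finset E) (hpos : ∀ v ∈ T, 0 < ⟪v, H⟫)
    (hobt : ∀ v ∈ T, ∀ u ∈ T, v ≠ u → ⟪v, u⟫ ≤ 0) (a : E → ℝ)
    (hsum : ∑ v ∈ T, a v • v = 0) : ∀ v ∈ T, a v = 0 := by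
  classical
  have hrest : ∑ v ∈ T.filter (fun v => ¬ 0 < a v), a v • v
      = ∑ v ∈ T.filter (fun v => a v < 0), a v • v := by
    refine (Finset.sum_subset ?_ ?_).symm
    · intro v hv
      simp only [Finset.mem_filter] at hv ⊢
      exact ⟨hv.1, by linarith [hv.2]⟩
    · intro v hv hnv
      simp only [Finset.mem_filter] at hv hnv
      have : a v = 0 := by
        rcases lt_trichotomy (a v) 0 with h | h | h
        · exact absurd ⟨hv.1, h⟩ hnv
        · exact h
        · exact absurd h hv.2
      rw [this, zero_smul]
  have hsplit : ∑ v ∈ T.filter (fun v => 0 < a v), a v • v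
      + ∑ v ∈ T.filter (fun v => a v < 0), a v • v = 0 := by
    rw [← hrest, Finset.sum_filter_add_sum_filter_not]; exact hsum
  have heq : ∑ v ∈ T.filter (fun v => 0 < a v), a v • v
      = ∑ v ∈ T.filter (fun v => a v < 0), (-(a v)) • v := by
    have h2 : ∑ v ∈ T.filter (fun v => a v < 0), (-(a v)) • v
        = -∑ v ∈ T.filter (fun v => a v < 0), a v • v := by
      rw [← Finset.sum_neg_distrib]
      exact Finset.sum_congr rfl fun v _ => by rw [neg_smul]
    rw [h2]
    linear_combination (norm := module) hsplit
  have hip : ⟪(∑ v ∈ T.filter (fun v => 0 < a v), a v • v),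
      (∑ w ∈ T.filter (fun w => a w < 0), (-(a w)) • w)⟫ ≤ 0 := by
    rw [sum_inner]
    refine Finset.sum_nonpos fun v hv => ?_
    rw [real_inner_smul_left, inner_sum, Finset.mul_sum]
    refine Finset.sum_nonpos fun w hw => ?_
    rw [real_inner_smul_right]
    simp only [Finset.mem_filter] at hv hw
    have hvw : v ≠ w := fun h => by rw [h] at hv; linarith [hv.2, hw.2]
    have h1 : ⟪v, w⟫ ≤ 0 := hobt v hv.1 w hw.1 hvw
    have h2 : (0:ℝ) ≤ a v * (-(a w)) := by nlinarith [hv.2, hw.2]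
    nlinarith [mul_nonneg h2 (neg_nonneg.2 h1)]
  have huu : ⟪(∑ v ∈ T.filter (fun v => 0 < a v), a v • v),
      (∑ v ∈ T.filter (fun v => 0 < a v), a v • v)⟫ ≤ 0 := by
    have := congrArg (fun z => (inner ℝ (∑ v ∈ T.filter (fun v => 0 < a v), a v • v) z : ℝ)) heq
    rw [this]
    exact hip
  have hX0 : ∑ v ∈ T.filter (fun v => 0 < a v), a v • v = 0 :=
    (inner_self_eq_zero (𝕜 := ℝ)).1 (le_antisymm huu real_inner_self_nonneg)
  have hY0 : ∑ w ∈ T.filter (fun w => a w < 0), (-(a w)) • w = 0 := by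
    rw [← heq]; exact hX0
  have hTp : ∀ v ∈ T, ¬ (0 < a v) := by
    intro v hv hva
    have h1 : ∑ w ∈ T.filter (fun w => 0 < a w), a w * ⟪w, H⟫ = 0 := by
      have := congrArg (fun z => (inner ℝ z H : ℝ)) hX0
      simpa [sum_inner, real_inner_smul_left] using this
    have h2 := (Finset.sum_eq_zero_iff_of_nonneg (fun w hw => ?_)).1 h1 v
      (Finset.mem_filter.2 ⟨hv, hva⟩)
    · have := mul_pos hva (hpos v hv)
      linarith
    · simp only [Finset.mem_filter] at hw
      exact (mul_pos hw.2 (hpos w hw.1)).le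
  have hTm : ∀ v ∈ T, ¬ (a v < 0) := by
    intro v hv hva
    have h1 : ∑ w ∈ T.filter (fun w => a w < 0), (-(a w)) * ⟪w, H⟫ = 0 := by
      have := congrArg (fun z => (inner ℝ z H : ℝ)) hY0
      simpa [sum_inner, real_inner_smul_left] using this
    have h2 := (Finset.sum_eq_zero_iff_of_nonneg (fun w hw => ?_)).1 h1 v
      (Finset.mem_filter.2 ⟨hv, hva⟩)
    · have := mul_pos (by linarith : (0:ℝ) < -(a v)) (hpos v hv)
      linarith
    · simp only [Finset.mem_filter] at hw
      exact (mul_pos (by linarith [hw.2] : (0:ℝ) < -(a w)) (hpos w hw.1)).le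
  intro v hv
  have h1 := hTp v hv
  have h2 := hTm v hv
  linarith [lt_trichotomy (a v) 0]
end aux4

section aux5
variable {E : Type*} [NormedAddCommGroup E] [InnerProductSpace ℝ E]
  {R S SH : Set E} {H : E}

lemma SH_subset (hSH : SH = {α ∈ R | ⟪α, H⟫ = 2}) : SH ⊆ R :=
  fun γ hγ => (hSH ▸ hγ).1

lemma SH_level (hSH : SH = {α ∈ R | ⟪α, H⟫ = 2}) : ∀ γ ∈ SH, ⟪γ, H⟫ = 2 :=
  fun γ hγ => (hSH ▸ hγ).2

lemma SH_obtuse (hR : IsRootSystem R) (hS : IsBase R S) (hH : ∀ α ∈ S, 0 < ⟪α, H⟫)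
    (hSH : SH = {α ∈ R | ⟪α, H⟫ = 2}) {γ γ' : E} (hγ : γ ∈ SH) (hγ' : γ' ∈ SH)
    (hne : γ ≠ γ') : ⟪γ, γ'⟫ ≤ 0 := by
  by_contra h
  push_neg at h
  rcases root_acute hR (SH_subset hSH hγ') (SH_subset hSH hγ) h with h1 | h1
  · exact hne h1
  · refine root_level_ne_zero hR hS hH h1 ?_
    rw [inner_sub_left, SH_level hSH γ hγ, SH_level hSH γ' hγ']
    ring

lemma exists_acute (hR : IsRootSystem R) (hS : IsBase R S) (hH : ∀ α ∈ S, 0 < ⟪α, H⟫)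
    (hSH : SH = {α ∈ R | ⟪α, H⟫ = 2}) {β : E} (hβR : β ∈ R)
    (hcomb : IsIntCombo SH β) (hlβ : 0 < ⟪β, H⟫) (hβno : β ∉ SH) :
    ∃ γ ∈ SH, 0 < ⟪β, γ⟫ := by
  classical
  by_contra hcon
  push_neg at hcon
  obtain ⟨c, hsupp, hsum⟩ := hcomb
  have hβns : β ∉ c.support := fun h => hβno (hsupp h)
  set T : Finset E := insert β c.support with hT
  have hz := obtuse_indep H T
    (fun v hv => by
      rcases Finset.mem_insert.1 hv with rfl | hv2
      · exact hlβ
      · rw [SH_level hSH v (hsupp (Finset.mem_coe.2 hv2))]; norm_num)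
    (fun v hv u hu hvu => by
      rcases Finset.mem_insert.1 hv with rfl | hv2
      · rcases Finset.mem_insert.1 hu with rfl | hu2
        · exact absurd rfl hvu
        · exact hcon u (hsupp (Finset.mem_coe.2 hu2))
      · rcases Finset.mem_insert.1 hu with rfl | hu2
        · rw [real_inner_comm]; exact hcon v (hsupp (Finset.mem_coe.2 hv2))
        · exact SH_obtuse hR hS hH hSH (hsupp (Finset.mem_coe.2 hv2))
            (hsupp (Finset.mem_coe.2 hu2)) hvu)
    (fun v => if v = β then 1 else -((c v : ℝ)))
    (by
      rw [hT, Finset.sum_insert hβns]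
      beta_reduce
      rw [if_pos rfl, one_smul]
      have : ∑ v ∈ c.support, (if v = β then (1:ℝ) else -((c v : ℝ))) • v
          = -∑ v ∈ c.support, ((c v : ℝ)) • v := by
        rw [← Finset.sum_neg_distrib]
        refine Finset.sum_congr rfl fun v hv => ?_
        rw [if_neg (fun h : v = β => hβns (h ▸ hv)), neg_smul]
      rw [this]
      have hβ2 : β = ∑ v ∈ c.support, ((c v : ℝ)) • v := by rw [hsum, Finsupp.sum]
      rw [← hβ2]
      abel)
    β (Finset.mem_insert_self β _)
  simp only [if_pos rfl] at hz
  exact one_ne_zero hz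

lemma refl_level_pos (hR : IsRootSystem R) (hS : IsBase R S) (hH : ∀ α ∈ S, 0 < ⟪α, H⟫)
    (hSH : SH = {α ∈ R | ⟪α, H⟫ = 2}) {β γ : E} (hβR : β ∈ R) (hγ : γ ∈ SH)
    (hcomb : IsIntCombo SH β) (hlβ : 0 < ⟪β, H⟫) (hne : β ≠ γ) :
    0 < ⟪sRefl γ β, H⟫ := by
  have hγR : γ ∈ R := SH_subset hSH hγ
  have hγγ : (0:ℝ) < ⟪γ, γ⟫ := root_self_pos hR hγR
  obtain ⟨n, hn⟩ := root_cartan hR hγR hβR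
  obtain ⟨c, hsupp, hsum⟩ := hcomb
  obtain hklev := combo_level (H := H) c hsupp (SH_level hSH)
  set kz : ℤ := c.sum fun _ n => n with hkz
  rw [← hsum] at hklev
  have hkpos : 0 < kz := by
    by_contra h
    push_neg at h
    have : (kz:ℝ) ≤ 0 := by exact_mod_cast h
    rw [hklev] at hlβ
    linarith
  have hy : sRefl γ β = β - ((n:ℤ):ℝ) • γ := by rw [sRefl_apply, hn]
  have hyR : sRefl γ β ∈ R := by rw [hy, ← hn]; exact root_refl_mem hR hγR hβR
  have hylev : ⟪sRefl γ β, H⟫ = 2 * ((kz - n : ℤ):ℝ) := by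
    rw [hy, inner_sub_left, real_inner_smul_left, SH_level hSH γ hγ, hklev]
    push_cast
    ring
  have hne0 : kz - n ≠ 0 := by
    intro h
    refine root_level_ne_zero hR hS hH hyR ?_
    rw [hylev, h]
    norm_num
  -- rule out kz < n via the string lemma
  have hnk : ¬ (kz < n) := by
    intro hlt
    have hn' : 2 * ⟪β, γ⟫ = (n:ℝ) * ⟪γ, γ⟫ := by
      rw [← hn]; field_simp
    have hstr := root_string hR hβR hγR hn' kz hkpos.le hlt.le
    rcases hstr with h0 | hmem
    · have hb : β = ((kz:ℤ):ℝ) • γ := sub_eq_zero.1 h0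
      have h1 : kz = 1 := root_int_smul_eq_one hR hγR hkpos.le (hb ▸ hβR)
      apply hne
      rw [hb, h1]
      norm_num
    · refine root_level_ne_zero hR hS hH hmem ?_
      rw [inner_sub_left, real_inner_smul_left, SH_level hSH γ hγ, hklev]
      ring
  rw [hylev]
  have : 0 < kz - n := by omega
  have : (0:ℝ) < ((kz - n : ℤ):ℝ) := by exact_mod_cast this
  linarith
end aux5

section aux6
variable {E : Type*} [NormedAddCommGroup E] [InnerProductSpace ℝ E]
  {R S SH : Set E} {H : E}

lemma main_nonneg (hR : IsRootSystem R) (hS : IsBase R S) (hH : ∀ α ∈ S, 0 < ⟪α, H⟫)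
    (hSH : SH = {α ∈ R | ⟪α, H⟫ = 2}) :
    ∀ k : ℕ, ∀ β, β ∈ subSystem SH → ⟪β, H⟫ = 2 * (k:ℝ) → IsNonnegCombo SH β := by
  classical
  intro k
  induction k using Nat.strong_induction_on with
  | _ k IH =>
  intro β hβsub hlev
  obtain ⟨hβR, hcomb⟩ := subSystem_root_and_combo hR (SH_subset hSH) hβsub
  have hk0 : k ≠ 0 := by
    intro h
    apply root_level_ne_zero hR hS hH hβR
    rw [hlev, h]
    norm_num
  have hlevpos : 0 < ⟪β, H⟫ := by
    rw [hlev]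
    have : (0:ℝ) < (k:ℝ) := by exact_mod_cast Nat.pos_of_ne_zero hk0
    linarith
  by_cases hβSH : β ∈ SH
  · refine ⟨Finsupp.single β 1, ?_, ?_, ?_⟩
    · refine Set.Subset.trans (Finset.coe_subset.2 Finsupp.support_single_subset) ?_
      simpa using hβSH
    · rw [Finsupp.sum_single_index (by simp)]; simp
    · intro α
      rcases eq_or_ne β α with rfl | h
      · simp
      · rw [Finsupp.single_apply, if_neg h]
  · obtain ⟨γ, hγ, hβγ⟩ := exists_acute hR hS hH hSH hβR hcomb hlevpos hβSH
    have hγR := SH_subset hSH hγ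
    have hγγ : (0:ℝ) < ⟪γ, γ⟫ := root_self_pos hR hγR
    obtain ⟨n, hn⟩ := root_cartan hR hγR hβR
    have hnpos : 0 < n := by
      have : (0:ℝ) < (n:ℝ) := by rw [← hn]; positivity
      exact_mod_cast this
    have hβneγ : β ≠ γ := fun h => hβSH (h ▸ hγ)
    have hylevpos := refl_level_pos hR hS hH hSH hβR hγ hcomb hlevpos hβneγ
    have hy : sRefl γ β = β - ((n:ℤ):ℝ) • γ := by rw [sRefl_apply, hn]
    have hysub : sRefl γ β ∈ subSystem SH := subSystem_refl_mem hγ hβsub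
    have hylev : ⟪sRefl γ β, H⟫ = 2 * (((k:ℤ) - n : ℤ):ℝ) := by
      rw [hy, inner_sub_left, real_inner_smul_left, SH_level hSH γ hγ, hlev]
      push_cast
      ring
    have h1 : 0 < (k:ℤ) - n := by
      have h2 : (0:ℝ) < 2 * (((k:ℤ) - n : ℤ):ℝ) := by rw [← hylev]; exact hylevpos
      have : (0:ℝ) < (((k:ℤ) - n : ℤ):ℝ) := by linarith
      exact_mod_cast this
    set m : ℕ := ((k:ℤ) - n).toNat with hm
    have hmlt : m < k := by omega
    have hmz : ((m:ℕ):ℤ) = (k:ℤ) - n := by omega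
    have hmr : ⟪sRefl γ β, H⟫ = 2 * (m:ℝ) := by
      rw [hylev, ← hmz]
      push_cast
      ring
    obtain ⟨c, hcsupp, hcsum, hcnn⟩ := IH m hmlt _ hysub hmr
    refine ⟨c + Finsupp.single γ n, ?_, ?_, ?_⟩
    · refine Set.Subset.trans (Finset.coe_subset.2 Finsupp.support_add) ?_
      rw [Finset.coe_union]
      refine Set.union_subset hcsupp ?_
      refine Set.Subset.trans (Finset.coe_subset.2 Finsupp.support_single_subset) ?_
      simpa using hγ
    · rw [Finsupp.sum_add_index' (by intro a; simp)
        (by intro a b₁ b₂; push_cast; rw [add_smul])]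
      rw [Finsupp.sum_single_index (by simp), ← hcsum, hy]
      match_scalars <;> ring
    · intro α
      simp only [Finsupp.add_apply, Finsupp.single_apply]
      have := hcnn α
      split <;> omega
end aux6

section aux7
variable {E : Type*} [NormedAddCommGroup E] [InnerProductSpace ℝ E]
  {R S SH : Set E} {H : E}

lemma invRoot_sRefl {γ : E} (h : ⟪γ, γ⟫ ≠ 0) (x : E) :
    invRoot (sRefl γ x) = sRefl γ (invRoot x) := by
  rw [invRoot, invRoot, sRefl_inner_self h, sRefl_smul]

lemma nonneg_single {γ : E} (hγ : γ ∈ SH) : IsNonnegCombo SH γ := by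
  classical
  refine ⟨Finsupp.single γ 1, ?_, ?_, ?_⟩
  · refine Set.Subset.trans (Finset.coe_subset.2 Finsupp.support_single_subset) ?_
    simpa using hγ
  · rw [Finsupp.sum_single_index (by simp)]; simp
  · intro α
    rcases eq_or_ne γ α with rfl | h
    · simp
    · rw [Finsupp.single_apply, if_neg h]

lemma nonneg_level_pos (hR : IsRootSystem R) (hS : IsBase R S) (hH : ∀ α ∈ S, 0 < ⟪α, H⟫)
    (hSH : SH = {α ∈ R | ⟪α, H⟫ = 2}) {β : E} (hβR : β ∈ R)
    (hnn : IsNonnegCombo SH β) : 0 < ⟪β, H⟫ := by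
  obtain ⟨c, hsupp, hsum, hcnn⟩ := hnn
  have hlev := combo_level (H := H) c hsupp (SH_level hSH)
  rw [← hsum] at hlev
  have hsumnn : 0 ≤ (c.sum fun _ n => n : ℤ) :=
    Finset.sum_nonneg fun a _ => hcnn a
  have h1 : (0:ℝ) ≤ ⟪β, H⟫ := by
    rw [hlev]
    have : (0:ℝ) ≤ ((c.sum fun _ n => n : ℤ):ℝ) := by exact_mod_cast hsumnn
    linarith
  exact lt_of_le_of_ne h1 (Ne.symm (root_level_ne_zero hR hS hH hβR))

lemma subsys_level_nat (hR : IsRootSystem R) (hSH : SH = {α ∈ R | ⟪α, H⟫ = 2}) {β : E}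
    (hβ : β ∈ subSystem SH) (hpos : 0 < ⟪β, H⟫) : ∃ k : ℕ, ⟪β, H⟫ = 2 * (k:ℝ) := by
  obtain ⟨hβR, c, hsupp, hsum⟩ := subSystem_root_and_combo hR (SH_subset hSH) hβ
  have hlev := combo_level (H := H) c hsupp (SH_level hSH)
  rw [← hsum] at hlev
  set kz : ℤ := c.sum fun _ n => n with hkz
  have hkpos : 0 < kz := by
    by_contra h
    push_neg at h
    have : (kz:ℝ) ≤ 0 := by exact_mod_cast h
    rw [hlev] at hpos
    linarith
  refine ⟨kz.toNat, ?_⟩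
  rw [hlev]
  congr 1
  exact_mod_cast (Int.toNat_of_nonneg hkpos.le).symm
end aux7

/-- For `H` in the open fundamental Weyl chamber with `S(H)` nonempty, the
orthogonal projection `H_∥` of `H` onto the span of `S(H)` equals the sum of the
positive inverse roots of the subsystem `R(H)` with base `S(H)`; in particular
`H_∥` lies in the `ℤ`-span of the inverse roots of `R`. -/
theorem proj_eq_sum_pos_invRoots
    {E : Type*} [NormedAddCommGroup E] [InnerProductSpace ℝ E] [FiniteDimensional ℝ E]
    (R S : Set E) (hR : IsRootSystem R) (hS : IsBase R S)
    (H : E) (hH : ∀ α ∈ S, 0 < ⟪α, H⟫)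
    (SH : Set E) (hSH : SH = {α ∈ R | ⟪α, H⟫ = 2}) (hne : SH.Nonempty)
    (Hpar Hperp : E) (hpar : Hpar ∈ Submodule.span ℝ SH)
    (hperp : ∀ v ∈ Submodule.span ℝ SH, ⟪Hperp, v⟫ = 0)
    (hdecomp : H = Hpar + Hperp)
    (P : Finset E) (hP : ↑P = {β ∈ subSystem SH | IsNonnegCombo SH β}) :
    Hpar = ∑ β ∈ P, invRoot β ∧
    Hpar ∈ Submodule.span ℤ (invRoot '' R) := by
  classical
  have memP : ∀ β, β ∈ P ↔ (β ∈ subSystem SH ∧ IsNonnegCombo SH β) := by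
    intro β
    rw [← Finset.mem_coe, hP]
    exact Iff.rfl
  have hPR : ∀ β ∈ P, β ∈ R := fun β hβ =>
    (subSystem_root_and_combo hR (SH_subset hSH) ((memP β).1 hβ).1).1
  have hPlev : ∀ β ∈ P, 0 < ⟪β, H⟫ := fun β hβ =>
    nonneg_level_pos hR hS hH hSH (hPR β hβ) ((memP β).1 hβ).2
  have hSHP : ∀ γ ∈ SH, γ ∈ P := fun γ hγ =>
    (memP γ).2 ⟨mem_subSystem_self hγ, nonneg_single hγ⟩
  -- the key computation: the sum of positive inverse roots pairs to 2 with each γ ∈ SH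
  have key : ∀ γ ∈ SH, ⟪(∑ β ∈ P, invRoot β), γ⟫ = 2 := by
    intro γ hγ
    have hγR : γ ∈ R := SH_subset hSH hγ
    have hγγ : (0:ℝ) < ⟪γ, γ⟫ := root_self_pos hR hγR
    have hγP : γ ∈ P := hSHP γ hγ
    have hmap : ∀ β ∈ P.erase γ, sRefl γ β ∈ P.erase γ := by
      intro β hβe
      obtain ⟨hβneγ, hβP⟩ := Finset.mem_erase.1 hβe
      have hβsub := ((memP β).1 hβP).1
      have hβR := hPR β hβP
      have hcomb := (subSystem_root_and_combo hR (SH_subset hSH) hβsub).2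
      have hlβ := hPlev β hβP
      have hylevpos := refl_level_pos hR hS hH hSH hβR hγ hcomb hlβ hβneγ
      have hysub : sRefl γ β ∈ subSystem SH := subSystem_refl_mem hγ hβsub
      obtain ⟨k, hk⟩ := subsys_level_nat hR hSH hysub hylevpos
      have hynn : IsNonnegCombo SH (sRefl γ β) :=
        main_nonneg hR hS hH hSH k _ hysub hk
      refine Finset.mem_erase.2 ⟨?_, (memP _).2 ⟨hysub, hynn⟩⟩
      intro hyeqγ
      have : β = sRefl γ γ := by
        conv_lhs => rw [← sRefl_invol (ne_of_gt hγγ) β]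
        rw [hyeqγ]
      rw [sRefl_self (ne_of_gt hγγ)] at this
      have hlβ2 := hPlev β hβP
      rw [this, inner_neg_left, SH_level hSH γ hγ] at hlβ2
      linarith
    have hinv : ∀ β ∈ P.erase γ, sRefl γ (sRefl γ β) = β :=
      fun β _ => sRefl_invol (ne_of_gt hγγ) β
    have hre : ∑ β ∈ P.erase γ, invRoot β = ∑ β ∈ P.erase γ, invRoot (sRefl γ β) := by
      refine Finset.sum_nbij' (fun β => sRefl γ β) (fun β => sRefl γ β)
        hmap hmap hinv hinv ?_
      intro β hβ
      simp [hinv β hβ]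
    have hcomm : ∀ β ∈ P.erase γ, invRoot (sRefl γ β) = sRefl γ (invRoot β) :=
      fun β _ => invRoot_sRefl (ne_of_gt hγγ) β
    have hlin : ∑ β ∈ P.erase γ, sRefl γ (invRoot β)
        = sRefl γ (∑ β ∈ P.erase γ, invRoot β) := by
      have := map_sum (sReflL γ) (fun β => invRoot β) (P.erase γ)
      exact this.symm
    have hAfix : sRefl γ (∑ β ∈ P.erase γ, invRoot β) = ∑ β ∈ P.erase γ, invRoot β := by
      rw [← hlin, ← Finset.sum_congr rfl hcomm, ← hre]
    have hA0 : ⟪(∑ β ∈ P.erase γ, invRoot β), γ⟫ = 0 := by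
      have h1 : (2 * ⟪(∑ β ∈ P.erase γ, invRoot β), γ⟫ / ⟪γ, γ⟫) • γ = 0 := by
        have := hAfix
        rw [sRefl_apply] at this
        have h2 := sub_eq_self.1 this
        exact h2
      rcases smul_eq_zero.1 h1 with h | h
      · rcases div_eq_zero_iff.1 h with h2 | h2
        · linarith
        · exact absurd h2 (ne_of_gt hγγ)
      · exact absurd h (root_ne_zero hR hγR)
    rw [← Finset.add_sum_erase P invRoot hγP, inner_add_left, hA0, add_zero,
      invRoot, real_inner_smul_left, div_mul_cancel₀]
    exact ne_of_gt hγγ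
  -- the sum lies in the real span of SH
  have hsumspan : (∑ β ∈ P, invRoot β) ∈ Submodule.span ℝ SH := by
    refine Submodule.sum_mem _ fun β hβ => ?_
    obtain ⟨c, hsupp, hsum, _⟩ := ((memP β).1 hβ).2
    have hβspan : β ∈ Submodule.span ℝ SH := by
      rw [hsum, Finsupp.sum]
      refine Submodule.sum_mem _ fun a ha => ?_
      exact Submodule.smul_mem _ _ (Submodule.subset_span (hsupp ha))
    exact Submodule.smul_mem _ _ hβspan
  -- the difference is orthogonal to the span and lies in it, hence zero
  have hd0 : ∀ γ ∈ SH, ⟪Hpar - ∑ β ∈ P, invRoot β, γ⟫ = 0 := by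
    intro γ hγ
    have h1 : ⟪Hpar, γ⟫ = 2 := by
      have h2 : ⟪H, γ⟫ = 2 := by
        rw [real_inner_comm]; exact SH_level hSH γ hγ
      have h3 : ⟪Hperp, γ⟫ = 0 := hperp γ (Submodule.subset_span hγ)
      rw [hdecomp, inner_add_left, h3, add_zero] at h2
      exact h2
    rw [inner_sub_left, h1, key γ hγ, sub_self]
  have hdspan : Hpar - ∑ β ∈ P, invRoot β ∈ Submodule.span ℝ SH :=
    Submodule.sub_mem _ hpar hsumspan
  have hall : ∀ v ∈ Submodule.span ℝ SH, ⟪Hpar - ∑ β ∈ P, invRoot β, v⟫ = 0 := by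
    intro v hv
    induction hv using Submodule.span_induction with
    | mem x hx => exact hd0 x hx
    | zero => exact inner_zero_right _
    | add x y _ _ ihx ihy => rw [inner_add_right, ihx, ihy, add_zero]
    | smul a x _ ih => rw [real_inner_smul_right, ih, mul_zero]
  have hzero : Hpar - ∑ β ∈ P, invRoot β = 0 :=
    (inner_self_eq_zero (𝕜 := ℝ)).1 (hall _ hdspan)
  have heq : Hpar = ∑ β ∈ P, invRoot β := sub_eq_zero.1 hzero
  refine ⟨heq, ?_⟩
  rw [heq]
  exact Submodule.sum_mem _ fun β hβ =>
    Submodule.subset_span ⟨β, hPR β hβ, rfl⟩
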